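/- Let (A, 𝒜) be a measurable space with probability measure μ, let γ > 0, β ∈ ℝ, and let f̂ : A → [0,1] be measurable. Let P and Q be probability measures on A with densities p = dP/dμ and q = dQ/dμ with respect to μ, where p > 0 μ-almost everywhere and ∫ q²/p dμ < ∞. Then ∫ f̂ dP − ∫ f̂ dQ + (1/γ)·∫ p·(q/p − 1)² dμ = ∫ p(a)·max(0, f̂(a) − β) dμ(a) + (1/γ)·∫ q(a)·( q(a)/p(a) − γ·max(0, f̂(a) − β) ) dμ(a) + ∫ (p(a) − q(a))·min(0, f̂(a) − β) dμ(a) − 1/γ. -/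

import Mathlib

open MeasureTheory

/-- Auxiliary facts about a probability density. -/
lemma density_facts {A : Type*} [MeasurableSpace A] (μ : Measure A)
    (p : A → ℝ) (hp : Measurable p) (hp0 : ∀ a, 0 ≤ p a)
    (P : Measure A) [IsProbabilityMeasure P]
    (hP : P = μ.withDensity (fun a => ENNReal.ofReal (p a))) :
    Integrable p μ ∧ (∫ a, p a ∂μ) = 1 ∧
      ∀ g : A → ℝ, (∫ a, g a ∂P) = ∫ a, p a * g a ∂μ := by
  have hPuniv : (∫⁻ a, ENNReal.ofReal (p a) ∂μ) = 1 := by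
    have h1 : P Set.univ = 1 := measure_univ
    rw [hP, withDensity_apply _ MeasurableSet.univ, setLIntegral_univ] at h1
    exact h1
  have hIp : Integrable p μ := by
    refine ⟨hp.aestronglyMeasurable, ?_⟩
    rw [hasFiniteIntegral_iff_norm]
    have : ∀ a, ENNReal.ofReal ‖p a‖ = ENNReal.ofReal (p a) := fun a => by
      rw [Real.norm_of_nonneg (hp0 a)]
    simp_rw [this, hPuniv]
    exact ENNReal.one_lt_top
  have hint1 : (∫ a, p a ∂μ) = 1 := by
    rw [integral_eq_lintegral_of_nonneg_ae (ae_of_all _ hp0) hp.aestronglyMeasurable,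
      hPuniv]
    simp
  refine ⟨hIp, hint1, fun g => ?_⟩
  rw [hP]
  have hcast : (fun a => ENNReal.ofReal (p a)) = fun a => ((p a).toNNReal : ENNReal) := rfl
  rw [hcast, integral_withDensity_eq_integral_smul hp.real_toNNReal g]
  refine integral_congr_ae (ae_of_all _ fun a => ?_)
  simp [NNReal.smul_def, Real.coe_toNNReal _ (hp0 a)]

/-- Decomposition of the chi-square upper bound relative to a benchmark level `β`:
with `P = p·μ`, `Q = q·μ`, `p > 0` μ-a.e. and `∫ q²/p dμ < ∞`,
`∫ f̂ dP − ∫ f̂ dQ + (1/γ)∫ p (q/p − 1)² dμ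
  = ∫ p·(f̂ − β)₊ dμ + (1/γ)∫ q·(q/p − γ(f̂ − β)₊) dμ + ∫ (p − q)·min(0, f̂ − β) dμ − 1/γ`. -/
theorem stmt_1 {A : Type*} [MeasurableSpace A]
    (μ : Measure A) [IsProbabilityMeasure μ]
    (γ : ℝ) (hγ : 0 < γ) (β : ℝ)
    (fhat : A → ℝ) (hfhat : Measurable fhat)
    (hfhat01 : ∀ a, fhat a ∈ Set.Icc (0 : ℝ) 1)
    (p q : A → ℝ) (hp : Measurable p) (hq : Measurable q)
    (hp0 : ∀ a, 0 ≤ p a) (hq0 : ∀ a, 0 ≤ q a)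
    (hppos : ∀ᵐ a ∂μ, 0 < p a)
    (hint : Integrable (fun a => (q a) ^ 2 / p a) μ)
    (P Q : Measure A) [IsProbabilityMeasure P] [IsProbabilityMeasure Q]
    (hP : P = μ.withDensity (fun a => ENNReal.ofReal (p a)))
    (hQ : Q = μ.withDensity (fun a => ENNReal.ofReal (q a))) :
    ∫ a, fhat a ∂P - ∫ a, fhat a ∂Q
        + (1 / γ) * ∫ a, p a * (q a / p a - 1) ^ 2 ∂μ
      = ∫ a, p a * max 0 (fhat a - β) ∂μ
        + (1 / γ) * ∫ a, q a * (q a / p a - γ * max 0 (fhat a - β)) ∂μ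
        + ∫ a, (p a - q a) * min 0 (fhat a - β) ∂μ
        - 1 / γ := by
  obtain ⟨hIp, hp1, hPint⟩ := density_facts μ p hp hp0 P hP
  obtain ⟨hIq, hq1, hQint⟩ := density_facts μ q hq hq0 Q hQ
  -- measurability of the truncations
  have hm_meas : Measurable (fun a => max 0 (fhat a - β)) :=
    measurable_const.max (hfhat.sub measurable_const)
  have hn_meas : Measurable (fun a => min 0 (fhat a - β)) :=
    measurable_const.min (hfhat.sub measurable_const)
  -- boundedness of the truncations
  have hbd : ∀ a : A, |fhat a - β| ≤ 1 + |β| := fun a => by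
    have h1 := (hfhat01 a).1
    have h2 := (hfhat01 a).2
    rw [abs_sub_comm]
    calc |β - fhat a| ≤ |β| + |fhat a| := abs_sub _ _
      _ ≤ |β| + 1 := by
          have : |fhat a| ≤ 1 := abs_le.mpr ⟨by linarith, h2⟩
          linarith
      _ = 1 + |β| := by ring
  have hm_bd : ∀ a : A, ‖max 0 (fhat a - β)‖ ≤ 1 + |β| := fun a => by
    rw [Real.norm_eq_abs]
    refine (abs_le.mpr ⟨?_, ?_⟩)
    · have := abs_nonneg β; linarith [le_max_left 0 (fhat a - β)]
    · exact max_le (by positivity) (le_trans (le_abs_self _) (hbd a))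
  have hn_bd : ∀ a : A, ‖min 0 (fhat a - β)‖ ≤ 1 + |β| := fun a => by
    rw [Real.norm_eq_abs]
    refine (abs_le.mpr ⟨?_, ?_⟩)
    · exact le_min (by have := abs_nonneg β; linarith) (neg_le_of_abs_le (hbd a))
    · have := abs_nonneg β; linarith [min_le_left (0 : ℝ) (fhat a - β)]
  have hf_bd : ∀ a : A, ‖fhat a‖ ≤ 1 := fun a => by
    rw [Real.norm_eq_abs]
    exact abs_le.mpr ⟨by linarith [(hfhat01 a).1], (hfhat01 a).2⟩
  -- various integrable products
  have hI_pm : Integrable (fun a => p a * max 0 (fhat a - β)) μ :=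
    (hIp.bdd_mul hm_meas.aestronglyMeasurable (ae_of_all _ hm_bd)).congr
      (ae_of_all _ fun a => mul_comm _ _)
  have hI_qm : Integrable (fun a => q a * max 0 (fhat a - β)) μ :=
    (hIq.bdd_mul hm_meas.aestronglyMeasurable (ae_of_all _ hm_bd)).congr
      (ae_of_all _ fun a => mul_comm _ _)
  have hI_pn : Integrable (fun a => p a * min 0 (fhat a - β)) μ :=
    (hIp.bdd_mul hn_meas.aestronglyMeasurable (ae_of_all _ hn_bd)).congr
      (ae_of_all _ fun a => mul_comm _ _)
  have hI_qn : Integrable (fun a => q a * min 0 (fhat a - β)) μ :=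
    (hIq.bdd_mul hn_meas.aestronglyMeasurable (ae_of_all _ hn_bd)).congr
      (ae_of_all _ fun a => mul_comm _ _)
  -- the chi-square integrand
  have hchi : (∫ a, p a * (q a / p a - 1) ^ 2 ∂μ)
      = (∫ a, (q a) ^ 2 / p a ∂μ) - 1 := by
    have hae : (fun a => p a * (q a / p a - 1) ^ 2)
        =ᵐ[μ] fun a => (q a) ^ 2 / p a - 2 * q a + p a := by
      filter_upwards [hppos] with a ha
      field_simp
      ring
    have h1 : Integrable (fun a => (q a) ^ 2 / p a - 2 * q a) μ :=
      hint.sub (hIq.const_mul 2)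
    rw [integral_congr_ae hae, integral_add h1 hIp, integral_sub hint (hIq.const_mul 2),
      integral_const_mul, hq1, hp1]
    ring
  -- second RHS integral
  have hsecond : (∫ a, q a * (q a / p a - γ * max 0 (fhat a - β)) ∂μ)
      = (∫ a, (q a) ^ 2 / p a ∂μ) - γ * ∫ a, q a * max 0 (fhat a - β) ∂μ := by
    have hae : (fun a => q a * (q a / p a - γ * max 0 (fhat a - β)))
        =ᵐ[μ] fun a => (q a) ^ 2 / p a - γ * (q a * max 0 (fhat a - β)) := by
      refine ae_of_all _ fun a => ?_
      ring
    rw [integral_congr_ae hae, integral_sub hint (hI_qm.const_mul γ),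
      integral_const_mul]
  -- third RHS integral
  have hthird : (∫ a, (p a - q a) * min 0 (fhat a - β) ∂μ)
      = (∫ a, p a * min 0 (fhat a - β) ∂μ) - ∫ a, q a * min 0 (fhat a - β) ∂μ := by
    have hae : (fun a => (p a - q a) * min 0 (fhat a - β))
        =ᵐ[μ] fun a => p a * min 0 (fhat a - β) - q a * min 0 (fhat a - β) := by
      refine ae_of_all _ fun a => ?_
      ring
    rw [integral_congr_ae hae, integral_sub hI_pn hI_qn]
  -- decomposition of ∫ f dP and ∫ f dQ
  have hsplit : ∀ (r : A → ℝ), (∀ a, 0 ≤ r a) → Integrable r μ →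
      (∫ a, r a ∂μ) = 1 →
      Integrable (fun a => r a * max 0 (fhat a - β)) μ →
      Integrable (fun a => r a * min 0 (fhat a - β)) μ →
      (∫ a, r a * fhat a ∂μ)
        = β + (∫ a, r a * max 0 (fhat a - β) ∂μ)
          + ∫ a, r a * min 0 (fhat a - β) ∂μ := by
    intro r hr0 hIr hr1 hIrm hIrn
    have hae : (fun a => r a * fhat a)
        =ᵐ[μ] fun a => β * r a + (r a * max 0 (fhat a - β)
          + r a * min 0 (fhat a - β)) := by
      refine ae_of_all _ fun a => ?_
      have h := max_add_min (0 : ℝ) (fhat a - β)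
      have h' : max 0 (fhat a - β) + min 0 (fhat a - β) = fhat a - β := by linarith
      show r a * fhat a
        = β * r a + (r a * max 0 (fhat a - β) + r a * min 0 (fhat a - β))
      rw [← mul_add, h']
      ring
    have hIβr : Integrable (fun a => β * r a) μ := hIr.const_mul β
    have hIrmn : Integrable
        (fun a => r a * max 0 (fhat a - β) + r a * min 0 (fhat a - β)) μ :=
      hIrm.add hIrn
    rw [integral_congr_ae hae, integral_add hIβr hIrmn,
      integral_add hIrm hIrn, integral_const_mul, hr1]
    ring
  have hfp := hsplit p hp0 hIp hp1 hI_pm hI_pn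
  have hfq := hsplit q hq0 hIq hq1 hI_qm hI_qn
  rw [hPint fhat, hQint fhat, hfp, hfq, hchi, hsecond, hthird]
  field_simp
  ring
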